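/- Let n ≥ 3 be an integer, Θ > 0, ρ ≥ 1 and γ ∈ (0,1]. Let μ be a Borel measure on ℝⁿ with μ({x : |x| ≥ ρ}) < ∞ and μ({x : ρ ≤ |x| ≤ r}) ≤ Θ r^{n−1} for all r ≥ ρ. Then for every β ∈ (0, n−2+γ): ∫_{{x : |x| ≥ ρ}} |x|^{−(n−2+γ)} dμ(x) ≤ ρ^{−β} · μ({x : |x| ≥ ρ})^{(1−γ+β)/(n−1)} · ((n−2+γ) Θ / β)^{(n−2+γ−β)/(n−1)}. -/

import Mathlib

open MeasureTheory

/-- Decay estimate with Hölder: under the annulus growth bound, the integral of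
`|x|^{−(n−2+γ)}` over `{|x| ≥ ρ}` is controlled by a power of the total mass. -/
theorem decay_holder_estimate (n : ℕ) (hn : 3 ≤ n) (Θ ρ γ : ℝ)
    (hΘ : 0 < Θ) (hρ : 1 ≤ ρ) (hγ : γ ∈ Set.Ioc (0 : ℝ) 1)
    (μ : Measure (EuclideanSpace ℝ (Fin n)))
    (hfin : μ {x | ρ ≤ ‖x‖} < ⊤)
    (hμ : ∀ r, ρ ≤ r →
      μ {x | ρ ≤ ‖x‖ ∧ ‖x‖ ≤ r} ≤ ENNReal.ofReal (Θ * r ^ ((n : ℝ) - 1)))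
    (β : ℝ) (hβ : β ∈ Set.Ioo (0 : ℝ) ((n : ℝ) - 2 + γ)) :
    ∫⁻ x in {x | ρ ≤ ‖x‖}, ENNReal.ofReal (‖x‖ ^ (-((n : ℝ) - 2 + γ))) ∂μ ≤
      ENNReal.ofReal (ρ ^ (-β)
        * (μ {x | ρ ≤ ‖x‖}).toReal ^ ((1 - γ + β) / ((n : ℝ) - 1))
        * (((n : ℝ) - 2 + γ) * Θ / β) ^ (((n : ℝ) - 2 + γ - β) / ((n : ℝ) - 1))) := by
  obtain ⟨hγ0, hγ1⟩ := hγ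
  obtain ⟨hβ0, hβq⟩ := hβ
  have hn' : (3 : ℝ) ≤ (n : ℝ) := by exact_mod_cast hn
  have hρ0 : (0 : ℝ) < ρ := lt_of_lt_of_le one_pos hρ
  set S : Set (EuclideanSpace ℝ (Fin n)) := {x | ρ ≤ ‖x‖} with hS_def
  set q : ℝ := (n : ℝ) - 2 + γ with hq_def
  have hq0 : 0 < q := by rw [hq_def]; linarith
  have hq_le : q ≤ (n : ℝ) - 1 := by rw [hq_def]; linarith
  have hqβ : 0 < q - β := by linarith
  have hn1 : (0 : ℝ) < (n : ℝ) - 1 := by linarith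
  have h1γβ : 0 < 1 - γ + β := by linarith
  set p : ℝ := ((n : ℝ) - 1) / (q - β) with hp_def
  set p' : ℝ := ((n : ℝ) - 1) / (1 - γ + β) with hp'_def
  have hp_pos : 0 < p := div_pos hn1 hqβ
  have hp1 : 1 < p := by
    rw [hp_def, lt_div_iff₀ hqβ]; linarith
  have hpq : p.HolderConjugate p' := by
    rw [Real.holderConjugate_iff]
    constructor
    · exact hp1
    · rw [hp_def, hp'_def]
      rw [inv_div, inv_div, ← add_div, div_eq_one_iff_eq hn1.ne']
      rw [hq_def]; ring
  have hinvp : 1 / p = (q - β) / ((n : ℝ) - 1) := by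
    rw [hp_def, one_div, inv_div]
  have hinvp' : 1 / p' = (1 - γ + β) / ((n : ℝ) - 1) := by
    rw [hp'_def, one_div, inv_div]
  have hinvp_pos : 0 < 1 / p := by positivity
  have hinvp'_pos : 0 < 1 / p' := by
    rw [hinvp']; positivity
  have hS_m : MeasurableSet S :=
    (isClosed_le continuous_const continuous_norm).measurableSet
  set s' : ℝ := q * p with hs'_def
  have hs'_pos : 0 < s' := mul_pos hq0 hp_pos
  set c : ℝ := (q - β) / q with hc_def
  have hc0 : 0 < c := div_pos hqβ hq0
  have hc1 : c < 1 := by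
    rw [hc_def, div_lt_one hq0]; linarith
  have hcs' : ((n : ℝ) - 1) / s' = c := by
    rw [hs'_def, hp_def, hc_def]
    field_simp
  set A : ℝ := ρ ^ (-s') with hA_def
  have hA0 : 0 < A := Real.rpow_pos_of_pos hρ0 _
  have hfmble : Measurable fun x : EuclideanSpace ℝ (Fin n) => ‖x‖ ^ (-s') :=
    measurable_norm.pow measurable_const
  -- Step 1: Hölder's inequality
  have key1 : ∫⁻ x in S, ENNReal.ofReal (‖x‖ ^ (-q)) ∂μ ≤
      (∫⁻ x in S, ENNReal.ofReal (‖x‖ ^ (-s')) ∂μ) ^ (1 / p) * (μ S) ^ (1 / p') := by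
    have h := ENNReal.lintegral_mul_le_Lp_mul_Lq (μ.restrict S) hpq
      (f := fun x => ENNReal.ofReal (‖x‖ ^ (-q))) (g := fun _ => 1)
      ((measurable_norm.pow measurable_const).ennreal_ofReal).aemeasurable
      aemeasurable_const
    simp only [Pi.mul_apply, mul_one, ENNReal.one_rpow, lintegral_one,
      Measure.restrict_apply_univ] at h
    refine h.trans (le_of_eq ?_)
    congr 2
    refine lintegral_congr fun x => ?_
    rw [ENNReal.ofReal_rpow_of_nonneg (Real.rpow_nonneg (norm_nonneg x) _) hp_pos.le]
    congr 1
    rw [← Real.rpow_mul (norm_nonneg x), neg_mul, ← hs'_def]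
  -- Step 2: layer cake estimate for the s'-integral
  have key2 : ∫⁻ x in S, ENNReal.ofReal (‖x‖ ^ (-s')) ∂μ ≤
      ENNReal.ofReal (Θ * (A ^ (1 - c) / (1 - c))) := by
    rw [lintegral_eq_lintegral_meas_lt (μ.restrict S)
      (Filter.Eventually.of_forall fun x => Real.rpow_nonneg (norm_nonneg x) _)
      hfmble.aemeasurable]
    have hbound : ∀ t ∈ Set.Ioi (0 : ℝ), (μ.restrict S) {a | t < ‖a‖ ^ (-s')} ≤
        (Set.Ioc (0 : ℝ) A).indicator (fun t => ENNReal.ofReal (Θ * t ^ (-c))) t := by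
      intro t ht
      have ht0 : (0 : ℝ) < t := ht
      have hEm : MeasurableSet {a : EuclideanSpace ℝ (Fin n) | t < ‖a‖ ^ (-s')} :=
        measurableSet_lt measurable_const hfmble
      rw [Measure.restrict_apply hEm]
      by_cases htA : t ≤ A
      · set r : ℝ := t ^ (-s'⁻¹) with hr_def
        have hAr : A ^ (-s'⁻¹) ≤ r :=
          Real.rpow_le_rpow_of_nonpos ht0 htA (neg_nonpos.mpr (inv_nonneg.mpr hs'_pos.le))
        have hrρ : ρ ≤ r := by
          calc ρ = (ρ ^ (-s')) ^ (-s'⁻¹) := by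
                rw [← Real.rpow_mul hρ0.le, neg_mul_neg, mul_inv_cancel₀ hs'_pos.ne',
                  Real.rpow_one]
            _ ≤ r := hAr
        have hsub : {a : EuclideanSpace ℝ (Fin n) | t < ‖a‖ ^ (-s')} ∩ S ⊆
            {x | ρ ≤ ‖x‖ ∧ ‖x‖ ≤ r} := by
          rintro a ⟨ha1, ha2⟩
          have hρa : ρ ≤ ‖a‖ := ha2
          refine ⟨hρa, ?_⟩
          have hna : 0 < ‖a‖ := lt_of_lt_of_le hρ0 hρa
          have h2 : (‖a‖ ^ (-s')) ^ (-s'⁻¹) ≤ r :=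
            Real.rpow_le_rpow_of_nonpos ht0 (le_of_lt ha1)
              (neg_nonpos.mpr (inv_nonneg.mpr hs'_pos.le))
          calc ‖a‖ = (‖a‖ ^ (-s')) ^ (-s'⁻¹) := by
                rw [← Real.rpow_mul hna.le, neg_mul_neg, mul_inv_cancel₀ hs'_pos.ne',
                  Real.rpow_one]
            _ ≤ r := h2
        have hrc : Θ * r ^ ((n : ℝ) - 1) = Θ * t ^ (-c) := by
          rw [hr_def, ← Real.rpow_mul ht0.le]
          congr 1
          rw [← hcs']
          field_simp
        calc μ ({a : EuclideanSpace ℝ (Fin n) | t < ‖a‖ ^ (-s')} ∩ S)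
            ≤ μ {x | ρ ≤ ‖x‖ ∧ ‖x‖ ≤ r} := measure_mono hsub
          _ ≤ ENNReal.ofReal (Θ * r ^ ((n : ℝ) - 1)) := hμ r hrρ
          _ = ENNReal.ofReal (Θ * t ^ (-c)) := by rw [hrc]
          _ = (Set.Ioc (0 : ℝ) A).indicator (fun t => ENNReal.ofReal (Θ * t ^ (-c))) t :=
              (Set.indicator_of_mem (Set.mem_Ioc.mpr ⟨ht0, htA⟩) (fun t => ENNReal.ofReal (Θ * t ^ (-c)))).symm
      · have hempty : {a : EuclideanSpace ℝ (Fin n) | t < ‖a‖ ^ (-s')} ∩ S = ∅ := by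
          ext a
          simp only [Set.mem_inter_iff, Set.mem_setOf_eq, Set.mem_empty_iff_false, iff_false,
            not_and]
          intro ha1 ha2
          have hρa : ρ ≤ ‖a‖ := ha2
          have : ‖a‖ ^ (-s') ≤ A := by
            rw [hA_def]
            exact Real.rpow_le_rpow_of_nonpos hρ0 hρa (neg_nonpos.mpr hs'_pos.le)
          exact absurd (lt_of_lt_of_le ha1 this) (not_lt.mpr (le_of_not_ge htA))
        rw [hempty, measure_empty]
        exact zero_le
    calc ∫⁻ t in Set.Ioi (0 : ℝ), (μ.restrict S) {a | t < ‖a‖ ^ (-s')}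
        ≤ ∫⁻ t in Set.Ioi (0 : ℝ),
            (Set.Ioc (0 : ℝ) A).indicator (fun t => ENNReal.ofReal (Θ * t ^ (-c))) t :=
          lintegral_mono_ae ((ae_restrict_iff' measurableSet_Ioi).2
            (Filter.Eventually.of_forall fun t ht => hbound t ht))
      _ = ∫⁻ t in Set.Ioc (0 : ℝ) A, ENNReal.ofReal (Θ * t ^ (-c)) := by
          rw [lintegral_indicator measurableSet_Ioc,
            Measure.restrict_restrict measurableSet_Ioc,
            Set.inter_eq_left.mpr Set.Ioc_subset_Ioi_self]
      _ = ENNReal.ofReal (∫ t in Set.Ioc (0 : ℝ) A, Θ * t ^ (-c)) := by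
          have hint : IntegrableOn (fun t : ℝ => Θ * t ^ (-c)) (Set.Ioc 0 A) volume := by
            have h1 : IntervalIntegrable (fun t : ℝ => t ^ (-c)) volume 0 A :=
              intervalIntegral.intervalIntegrable_rpow' (by linarith)
            have h2 : IntervalIntegrable (fun t : ℝ => Θ * t ^ (-c)) volume 0 A :=
              h1.const_mul Θ
            exact (intervalIntegrable_iff_integrableOn_Ioc_of_le hA0.le).mp h2
          have hnn : 0 ≤ᵐ[volume.restrict (Set.Ioc (0 : ℝ) A)]
              fun t : ℝ => Θ * t ^ (-c) := by
            refine (ae_restrict_iff' measurableSet_Ioc).2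
              (Filter.Eventually.of_forall fun t ht => ?_)
            exact mul_nonneg hΘ.le (Real.rpow_nonneg ht.1.le _)
          exact (ofReal_integral_eq_lintegral_ofReal hint hnn).symm
      _ = ENNReal.ofReal (Θ * (A ^ (1 - c) / (1 - c))) := by
          congr 1
          rw [MeasureTheory.integral_const_mul]
          congr 1
          rw [← intervalIntegral.integral_of_le hA0.le,
            integral_rpow (Or.inl (by linarith : (-1 : ℝ) < -c)),
            Real.zero_rpow (by linarith : -c + 1 ≠ 0)]
          rw [show -c + 1 = 1 - c by ring]
          ring
  -- Step 3: combine
  have hB : 0 ≤ Θ * (A ^ (1 - c) / (1 - c)) := by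
    have : 0 < 1 - c := by linarith
    positivity
  set M : ℝ := (μ S).toReal with hM_def
  have hM0 : 0 ≤ M := ENNReal.toReal_nonneg
  have hμS : μ S = ENNReal.ofReal M := (ENNReal.ofReal_toReal hfin.ne).symm
  calc ∫⁻ x in S, ENNReal.ofReal (‖x‖ ^ (-q)) ∂μ
      ≤ (∫⁻ x in S, ENNReal.ofReal (‖x‖ ^ (-s')) ∂μ) ^ (1 / p) * (μ S) ^ (1 / p') := key1
    _ ≤ (ENNReal.ofReal (Θ * (A ^ (1 - c) / (1 - c)))) ^ (1 / p)
          * (ENNReal.ofReal M) ^ (1 / p') := by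
        rw [← hμS]
        exact mul_le_mul' (ENNReal.rpow_le_rpow key2 hinvp_pos.le) le_rfl
    _ = ENNReal.ofReal ((Θ * (A ^ (1 - c) / (1 - c))) ^ (1 / p) * M ^ (1 / p')) := by
        rw [ENNReal.ofReal_rpow_of_nonneg hB hinvp_pos.le,
          ENNReal.ofReal_rpow_of_nonneg hM0 hinvp'_pos.le,
          ← ENNReal.ofReal_mul (Real.rpow_nonneg hB _)]
    _ ≤ ENNReal.ofReal (ρ ^ (-β) * M ^ ((1 - γ + β) / ((n : ℝ) - 1))
          * (q * Θ / β) ^ ((q - β) / ((n : ℝ) - 1))) := by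
        apply ENNReal.ofReal_le_ofReal
        apply le_of_eq
        have h1c : 1 - c = β / q := by
          rw [hc_def]; field_simp; ring
        have hXeq : Θ * (A ^ (1 - c) / (1 - c)) = (q * Θ / β) * ρ ^ (-s' * (1 - c)) := by
          rw [hA_def, ← Real.rpow_mul hρ0.le, h1c]
          field_simp
        rw [hXeq]
        have hqΘβ : 0 ≤ q * Θ / β := by positivity
        rw [Real.mul_rpow hqΘβ (Real.rpow_nonneg hρ0.le _)]
        rw [← Real.rpow_mul hρ0.le]
        have hexp : -s' * (1 - c) * (1 / p) = -β := by
          rw [hs'_def, h1c, hp_def]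
          field_simp
        rw [hexp, hinvp, hinvp']
        ring
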